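/- (Corollary to Serfling's bound) Let x₁, …, x_n be values in [0,1] with average μ_X = (1/n) Σᵢ xᵢ. Let T be a uniformly random subset of {1, …, n} of size t with 0 < t < n, let μ_T = (1/t) Σ_{i∈T} xᵢ, and let μ_K = (1/(n − t)) Σ_{i∉T} xᵢ be the average over the complement K of size k = n − t. Then for any ε > 0, Pr[ μ_K − μ_T ≥ √( (n (t + 1) / (2 t² (n − t))) · ln(1/ε) ) ] ≤ ε. -/

import Mathlib

open Finset

open scoped Classical

lemma hoeffding_core (p : ℝ) (hp0 : 0 ≤ p) (hp1 : p ≤ 1) (s : ℝ) :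
    1 - p + p * Real.exp s ≤ Real.exp (s * p + s ^ 2 / 8) := by
  set D : ℝ → ℝ := fun u => 1 - p + p * Real.exp u with hDdef
  have hD : ∀ u, 0 < D u := by
    intro u
    rcases eq_or_lt_of_le hp0 with h | h
    · simp [hDdef, ← h]
    · have h2 : 0 < p * Real.exp u := by positivity
      show 0 < 1 - p + p * Real.exp u
      nlinarith
  have hasD : ∀ u, HasDerivAt D (p * Real.exp u) u := by
    intro u
    exact ((Real.hasDerivAt_exp u).const_mul p).const_add (1 - p)
  set h : ℝ → ℝ := fun u => p + u / 4 - p * Real.exp u / D u with hhdef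
  have hash : ∀ u, HasDerivAt h (1 / 4 - (1 - p) * (p * Real.exp u) / (D u) ^ 2) u := by
    intro u
    have h1 : HasDerivAt (fun v : ℝ => p + v / 4) (1 / 4) u := by
      simpa using ((hasDerivAt_id u).div_const 4).const_add p
    have h2 : HasDerivAt (fun v => p * Real.exp v) (p * Real.exp u) u :=
      (Real.hasDerivAt_exp u).const_mul p
    have h3 := h2.div (hasD u) (ne_of_gt (hD u))
    have := h1.sub h3
    refine this.congr_deriv ?_
    have hDu := (hD u).ne'
    field_simp
    simp only [hDdef]
    ring
  have hmono : Monotone h := by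
    have hdiff : Differentiable ℝ h := fun u => (hash u).differentiableAt
    refine monotone_of_deriv_nonneg hdiff ?_
    intro u
    rw [(hash u).deriv]
    have key : (1 - p) * (p * Real.exp u) * 4 ≤ (1 - p + p * Real.exp u) ^ 2 := by
      nlinarith [sq_nonneg ((1 - p) - p * Real.exp u)]
    have hD2 : (0:ℝ) < (D u) ^ 2 := pow_pos (hD u) 2
    rw [sub_nonneg, div_le_iff₀ hD2]
    have hDu : D u = 1 - p + p * Real.exp u := rfl
    rw [hDu]
    linarith
  have h0 : h 0 = 0 := by
    simp [hhdef, hDdef, Real.exp_zero]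
  set g : ℝ → ℝ := fun u => u * p + u ^ 2 / 8 - Real.log (D u) with hgdef
  have hasg : ∀ u, HasDerivAt g (h u) u := by
    intro u
    have h1 : HasDerivAt (fun v : ℝ => v * p) p u := by simpa using (hasDerivAt_id u).mul_const p
    have h2 : HasDerivAt (fun v : ℝ => v ^ 2 / 8) (u / 4) u := by
      have := (hasDerivAt_pow 2 u).div_const 8
      refine this.congr_deriv ?_; norm_num; ring
    have h3 : HasDerivAt (fun v => Real.log (D v)) (p * Real.exp u / D u) u :=
      (hasD u).log (ne_of_gt (hD u))
    have := (h1.add h2).sub h3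
    exact this
  have g0 : g 0 = 0 := by simp [hgdef, hDdef]
  have hg : ∀ u, 0 ≤ g u := by
    intro u
    have hdiffg : ∀ v, DifferentiableAt ℝ g v := fun v => (hasg v).differentiableAt
    rcases le_total 0 u with hu | hu
    · have : MonotoneOn g (Set.Ici 0) := by
        refine monotoneOn_of_deriv_nonneg (convex_Ici 0) (Continuous.continuousOn ?_)
          (fun v _ => (hdiffg v).differentiableWithinAt) ?_
        · exact Differentiable.continuous (fun v => hdiffg v)
        · intro v hv
          rw [(hasg v).deriv]
          rw [interior_Ici] at hv
          have := hmono (le_of_lt hv)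
          rw [h0] at this; exact this
      have := this (Set.self_mem_Ici) (Set.mem_Ici.mpr hu) hu
      rwa [g0] at this
    · have : AntitoneOn g (Set.Iic 0) := by
        refine antitoneOn_of_deriv_nonpos (convex_Iic 0) (Continuous.continuousOn ?_)
          (fun v _ => (hdiffg v).differentiableWithinAt) ?_
        · exact Differentiable.continuous (fun v => hdiffg v)
        · intro v hv
          rw [(hasg v).deriv]
          rw [interior_Iic] at hv
          have := hmono (le_of_lt hv)
          rw [h0] at this; exact this
      have := this (Set.mem_Iic.mpr hu) (Set.self_mem_Iic) hu
      rwa [g0] at this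
  have hlog : Real.log (D s) ≤ s * p + s ^ 2 / 8 := by
    have := hg s
    simp only [hgdef] at this
    linarith
  calc D s = Real.exp (Real.log (D s)) := (Real.exp_log (hD s)).symm
    _ ≤ Real.exp (s * p + s ^ 2 / 8) := Real.exp_le_exp.mpr hlog

lemma hoeffding_finset {ι : Type*} [DecidableEq ι] (F : Finset ι) (hF : F.Nonempty)
    (y : ι → ℝ) (hy : ∀ i ∈ F, y i ∈ Set.Icc (0:ℝ) 1) (s c : ℝ) :
    ∑ j ∈ F, Real.exp (s * (y j - c)) ≤
      (F.card : ℝ) * Real.exp (s * ((∑ j ∈ F, y j) / F.card - c) + s ^ 2 / 8) := by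
  have hcard : (0:ℝ) < F.card := by exact_mod_cast card_pos.mpr hF
  set m : ℝ := (∑ j ∈ F, y j) / F.card with hm
  have hm0 : 0 ≤ m := by
    apply div_nonneg _ hcard.le
    exact sum_nonneg fun i hi => (hy i hi).1
  have hm1 : m ≤ 1 := by
    rw [hm, div_le_one hcard]
    calc ∑ j ∈ F, y j ≤ ∑ j ∈ F, (1:ℝ) := sum_le_sum fun i hi => (hy i hi).2
      _ = F.card := by simp
  have step1 : ∀ j ∈ F, Real.exp (s * y j) ≤ (1 - y j) + y j * Real.exp s := by
    intro j hj
    have h0 := (hy j hj).1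
    have h1 := (hy j hj).2
    have := convexOn_exp.2 (Set.mem_univ (0:ℝ)) (Set.mem_univ s)
      (by linarith : (0:ℝ) ≤ 1 - y j) h0 (by ring)
    simpa [smul_eq_mul, mul_comm] using this
  have step2 : ∑ j ∈ F, Real.exp (s * y j) ≤ (F.card : ℝ) * (1 - m + m * Real.exp s) := by
    calc ∑ j ∈ F, Real.exp (s * y j) ≤ ∑ j ∈ F, ((1 - y j) + y j * Real.exp s) :=
          sum_le_sum step1
      _ = (F.card : ℝ) - (∑ j ∈ F, y j) + (∑ j ∈ F, y j) * Real.exp s := by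
          rw [sum_add_distrib, sum_sub_distrib, ← sum_mul]; simp
      _ = (F.card : ℝ) * (1 - m + m * Real.exp s) := by
          rw [hm]; field_simp
  have step3 : (F.card : ℝ) * (1 - m + m * Real.exp s) ≤
      (F.card : ℝ) * Real.exp (s * m + s ^ 2 / 8) :=
    mul_le_mul_of_nonneg_left (hoeffding_core m hm0 hm1 s) hcard.le
  have key : ∀ j, Real.exp (s * (y j - c)) = Real.exp (s * y j) * Real.exp (-(s * c)) := by
    intro j
    rw [← Real.exp_add]; ring_nf
  calc ∑ j ∈ F, Real.exp (s * (y j - c))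
      = (∑ j ∈ F, Real.exp (s * y j)) * Real.exp (-(s * c)) := by
        rw [sum_mul]; exact sum_congr rfl fun j _ => key j
    _ ≤ (F.card : ℝ) * Real.exp (s * m + s ^ 2 / 8) * Real.exp (-(s * c)) := by
        apply mul_le_mul_of_nonneg_right (le_trans step2 step3) (Real.exp_pos _).le
    _ = (F.card : ℝ) * Real.exp (s * (m - c) + s ^ 2 / 8) := by
        rw [mul_assoc, ← Real.exp_add]; ring_nf

lemma double_count {α : Type*} [DecidableEq α] [Fintype α] (m : ℕ) (f : Finset α → ℝ) :
    ((m + 1 : ℕ) : ℝ) * ∑ K ∈ powersetCard (m + 1) (univ : Finset α), f K =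
      ∑ K ∈ powersetCard m (univ : Finset α), ∑ j ∈ Kᶜ, f (insert j K) := by
  rw [mul_sum]
  have h1 : ∀ K ∈ powersetCard (m + 1) (univ : Finset α),
      ((m + 1 : ℕ) : ℝ) * f K = ∑ _j ∈ K, f K := by
    intro K hK
    rw [sum_const, (mem_powersetCard.mp hK).2, nsmul_eq_mul]
  rw [sum_congr rfl h1, sum_sigma', sum_sigma']
  refine sum_nbij' (fun p => ⟨p.1.erase p.2, p.2⟩) (fun p => ⟨insert p.2 p.1, p.2⟩)
    ?_ ?_ ?_ ?_ ?_
  · rintro ⟨K, j⟩ hp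
    rw [mem_sigma] at hp ⊢
    obtain ⟨hK, hj⟩ := hp
    rw [mem_powersetCard] at hK
    constructor
    · rw [mem_powersetCard]
      exact ⟨(erase_subset _ _).trans hK.1, by rw [card_erase_of_mem hj, hK.2]; rfl⟩
    · simp
  · rintro ⟨K, j⟩ hp
    rw [mem_sigma] at hp ⊢
    obtain ⟨hK, hj⟩ := hp
    rw [mem_powersetCard] at hK
    have hjK : j ∉ K := by simpa using hj
    constructor
    · rw [mem_powersetCard]
      exact ⟨subset_univ _, by rw [card_insert_of_notMem hjK, hK.2]⟩
    · simp [mem_insert]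
  · rintro ⟨K, j⟩ hp
    rw [mem_sigma] at hp
    simp only [Sigma.mk.inj_iff, heq_eq_eq]
    exact ⟨insert_erase hp.2, trivial⟩
  · rintro ⟨K, j⟩ hp
    rw [mem_sigma] at hp
    have hjK : j ∉ K := by simpa using hp.2
    simp only [Sigma.mk.inj_iff, heq_eq_eq]
    exact ⟨erase_insert hjK, trivial⟩
  · rintro ⟨K, j⟩ hp
    rw [mem_sigma] at hp
    simp only
    rw [insert_erase hp.2]

noncomputable def Bco (n : ℕ) : ℕ → ℝ := fun m => ∑ j ∈ Finset.range m, 1 / ((n:ℝ) - (j+1)) ^ 2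

lemma mgf_bound (n : ℕ) (x : Fin n → ℝ) (hx : ∀ i, x i ∈ Set.Icc (0:ℝ) 1) :
    ∀ k, k < n → ∀ s : ℝ,
      ∑ K ∈ powersetCard k (univ : Finset (Fin n)),
          Real.exp (s * ∑ i ∈ K, (x i - (∑ i, x i) / n)) ≤
        (n.choose k : ℝ) * Real.exp (s ^ 2 * ((n:ℝ) - k) ^ 2 * Bco n k / 8) := by
  set μ : ℝ := (∑ i, x i) / n with hμ
  set w : Finset (Fin n) → ℝ := fun K => ∑ i ∈ K, (x i - μ) with hw
  intro k
  induction k with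
  | zero =>
    intro _ s
    simp [Bco, hw]
  | succ k ih =>
    intro hk1 s
    have hkn : k < n := by omega
    have hn : 0 < n := by omega
    have hnR : (0:ℝ) < n := by exact_mod_cast hn
    have hcR : (0:ℝ) < (n:ℝ) - k := by
      have : (k:ℝ) < n := by exact_mod_cast hkn
      linarith
    have hc1R : (0:ℝ) < (n:ℝ) - (k+1) := by
      have : ((k+1 : ℕ):ℝ) < n := by exact_mod_cast hk1
      push_cast at this
      linarith
    set s' : ℝ := s * ((n:ℝ) - k - 1) / ((n:ℝ) - k) with hs'
    -- key identity for w K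
    have hwK : ∀ K ∈ powersetCard k (univ : Finset (Fin n)),
        (∑ j ∈ Kᶜ, x j) / (Kᶜ.card : ℝ) - μ = -(w K) / ((n:ℝ) - k) := by
      intro K hK
      obtain ⟨-, hKcard⟩ := mem_powersetCard.mp hK
      have hcompl : (Kᶜ.card : ℝ) = (n:ℝ) - k := by
        rw [card_compl, hKcard, Fintype.card_fin, Nat.cast_sub hkn.le]
      have hsum : ∑ j ∈ Kᶜ, x j = (∑ i, x i) - ∑ i ∈ K, x i := by
        have := Finset.sum_add_sum_compl K x
        linarith
      have hwKval : w K = (∑ i ∈ K, x i) - k * μ := by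
        simp [hw, sum_sub_distrib, sum_const, hKcard, nsmul_eq_mul]
      rw [hcompl, hsum, hwKval, hμ]
      field_simp
      ring
    -- inner bound
    have inner : ∀ K ∈ powersetCard k (univ : Finset (Fin n)),
        ∑ j ∈ Kᶜ, Real.exp (s * w (insert j K)) ≤
          ((n:ℝ) - k) * Real.exp (s' * w K) * Real.exp (s ^ 2 / 8) := by
      intro K hK
      obtain ⟨-, hKcard⟩ := mem_powersetCard.mp hK
      have hcompl : (Kᶜ.card : ℝ) = (n:ℝ) - k := by
        rw [card_compl, hKcard, Fintype.card_fin, Nat.cast_sub hkn.le]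
      have hne : Kᶜ.Nonempty := by
        rw [← card_pos]
        have : (0:ℝ) < (Kᶜ.card : ℝ) := by rw [hcompl]; exact hcR
        exact_mod_cast this
      have step1 : ∀ j ∈ Kᶜ, Real.exp (s * w (insert j K)) =
          Real.exp (s * (x j - μ)) * Real.exp (s * w K) := by
        intro j hj
        have hjK : j ∉ K := by simpa using hj
        simp only [hw]
        rw [sum_insert hjK, ← Real.exp_add]
        congr 1
        ring
      calc ∑ j ∈ Kᶜ, Real.exp (s * w (insert j K))
          = (∑ j ∈ Kᶜ, Real.exp (s * (x j - μ))) * Real.exp (s * w K) := by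
            rw [sum_mul]; exact sum_congr rfl step1
        _ ≤ ((Kᶜ.card : ℝ) * Real.exp (s * ((∑ j ∈ Kᶜ, x j) / Kᶜ.card - μ) + s ^ 2 / 8)) *
              Real.exp (s * w K) := by
            apply mul_le_mul_of_nonneg_right _ (Real.exp_pos _).le
            exact hoeffding_finset Kᶜ hne x (fun i _ => hx i) s μ
        _ = ((n:ℝ) - k) * Real.exp (s' * w K) * Real.exp (s ^ 2 / 8) := by
            rw [hwK K hK, hcompl, mul_assoc, mul_assoc]
            congr 1
            rw [← Real.exp_add, ← Real.exp_add]
            congr 1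
            rw [hs']
            field_simp
            ring
    -- combine via double counting
    have hdc := double_count (α := Fin n) k (fun K => Real.exp (s * w K))
    have main : ((k+1 : ℕ) : ℝ) * ∑ K ∈ powersetCard (k+1) (univ : Finset (Fin n)),
        Real.exp (s * w K) ≤
        ((n:ℝ) - k) * Real.exp (s ^ 2 / 8) *
          ∑ K ∈ powersetCard k (univ : Finset (Fin n)), Real.exp (s' * w K) := by
      rw [hdc]
      calc ∑ K ∈ powersetCard k (univ : Finset (Fin n)), ∑ j ∈ Kᶜ,
            Real.exp (s * w (insert j K))
          ≤ ∑ K ∈ powersetCard k (univ : Finset (Fin n)),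
            ((n:ℝ) - k) * Real.exp (s' * w K) * Real.exp (s ^ 2 / 8) := sum_le_sum inner
        _ = ((n:ℝ) - k) * Real.exp (s ^ 2 / 8) *
            ∑ K ∈ powersetCard k (univ : Finset (Fin n)), Real.exp (s' * w K) := by
            rw [mul_sum]; exact sum_congr rfl fun K _ => by ring
    have ihs' := ih hkn s'
    -- final arithmetic
    have hchoose : ((n:ℝ) - k) * (n.choose k : ℝ) = ((k:ℝ) + 1) * (n.choose (k+1) : ℝ) := by
      have h := Nat.choose_succ_right_eq n k
      have hcast : ((n.choose (k+1)) : ℝ) * ((k:ℝ) + 1) = ((n.choose k) : ℝ) * (((n - k : ℕ)) : ℝ) := by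
        exact_mod_cast h
      rw [Nat.cast_sub hkn.le] at hcast
      linear_combination -hcast
    have hexp : Real.exp (s ^ 2 / 8) * Real.exp (s' ^ 2 * ((n:ℝ) - k) ^ 2 * Bco n k / 8) =
        Real.exp (s ^ 2 * ((n:ℝ) - ((k:ℝ)+1)) ^ 2 * Bco n (k+1) / 8) := by
      rw [← Real.exp_add]
      congr 1
      have hB : Bco n (k+1) = Bco n k + 1 / ((n:ℝ) - (k+1)) ^ 2 := by
        rw [Bco, Finset.sum_range_succ]; rfl
      have hs'2 : s' ^ 2 * ((n:ℝ) - k) ^ 2 = s ^ 2 * ((n:ℝ) - (k+1)) ^ 2 := by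
        rw [hs']
        push_cast
        field_simp
        ring
      rw [hB, hs'2]
      have h1 : ((n:ℝ) - (k+1)) ^ 2 ≠ 0 := by positivity
      push_cast
      push_cast at h1
      field_simp
      ring
    have hk1R : (0:ℝ) < ((k+1:ℕ):ℝ) := by positivity
    refine le_of_mul_le_mul_left ?_ hk1R
    push_cast
    push_cast at main
    calc ((k:ℝ)+1) * ∑ K ∈ powersetCard (k+1) (univ : Finset (Fin n)),
          Real.exp (s * ∑ i ∈ K, (x i - μ))
        ≤ ((n:ℝ) - k) * Real.exp (s ^ 2 / 8) *
            ∑ K ∈ powersetCard k (univ : Finset (Fin n)), Real.exp (s' * w K) := main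
      _ ≤ ((n:ℝ) - k) * Real.exp (s ^ 2 / 8) *
            ((n.choose k : ℝ) * Real.exp (s' ^ 2 * ((n:ℝ) - k) ^ 2 * Bco n k / 8)) := by
          apply mul_le_mul_of_nonneg_left ihs'
          positivity
      _ = ((k:ℝ)+1) * ((n.choose (k+1) : ℝ) *
            Real.exp (s ^ 2 * ((n:ℝ) - ((k:ℝ)+1)) ^ 2 * Bco n (k+1) / 8)) := by
          rw [← hexp]
          linear_combination Real.exp (s ^ 2 / 8) *
            Real.exp (s' ^ 2 * ((n:ℝ) - (k:ℝ)) ^ 2 * Bco n k / 8) * hchoose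

lemma Bco_le (n : ℕ) : ∀ k, k < n → Bco n k ≤ k * ((n:ℝ) - k + 1) / (n * ((n:ℝ) - k) ^ 2) := by
  intro k
  induction k with
  | zero => intro hn; simp [Bco]
  | succ k ih =>
    intro hk1
    have hkn : k < n := by omega
    have ihk := ih hkn
    have hnR : (0:ℝ) < n := by
      have : 0 < n := by omega
      exact_mod_cast this
    have hA : (2:ℝ) ≤ (n:ℝ) - k := by
      have : (k:ℝ) + 2 ≤ n := by exact_mod_cast hk1
      linarith
    have hk0 : (0:ℝ) ≤ k := Nat.cast_nonneg k
    have hB : Bco n (k+1) = Bco n k + 1 / ((n:ℝ) - ((k:ℝ)+1)) ^ 2 := by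
      rw [Bco, Finset.sum_range_succ]; rfl
    set A : ℝ := (n:ℝ) - k with hAdef
    have hA1 : (0:ℝ) < A - 1 := by linarith
    have hgoal : (k:ℝ) * (A + 1) / (n * A ^ 2) + 1 / (A - 1) ^ 2 ≤
        ((k:ℝ) + 1) * A / (n * (A - 1) ^ 2) := by
      rw [div_add_div _ _ (by positivity) (by positivity), div_le_div_iff₀ (by positivity) (by positivity)]
      have hn_eq : (n:ℝ) = (k:ℝ) + A := by rw [hAdef]; ring
      have key : (k:ℝ)*(A+1)*(A-1)^2 + n*A^2 ≤ ((k:ℝ)+1)*A^3 := by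
        nlinarith [mul_nonneg hk0 hA1.le]
      have key2 := mul_le_mul_of_nonneg_right key (by positivity : (0:ℝ) ≤ n*(A-1)^2)
      nlinarith [key2]
    have hstep : ((n:ℝ) - ((k:ℝ)+1)) = A - 1 := by rw [hAdef]; ring
    calc Bco n (k+1) = Bco n k + 1 / (A - 1) ^ 2 := by rw [hB, hstep]
      _ ≤ (k:ℝ) * (A + 1) / (n * A ^ 2) + 1 / (A - 1) ^ 2 := by linarith
      _ ≤ ((k:ℝ) + 1) * A / (n * (A - 1) ^ 2) := hgoal
      _ = ((k+1:ℕ):ℝ) * ((n:ℝ) - ((k+1:ℕ):ℝ) + 1) / (n * ((n:ℝ) - ((k+1:ℕ):ℝ)) ^ 2) := by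
          push_cast
          rw [hstep]
          ring

lemma chernoff_count (n k : ℕ) (x : Fin n → ℝ) (s a : ℝ) (hs : 0 ≤ s) :
    (((powersetCard k (univ : Finset (Fin n))).filter
        (fun K => a ≤ ∑ i ∈ K, (x i - (∑ i, x i) / n))).card : ℝ) * Real.exp (s * a) ≤
      ∑ K ∈ powersetCard k (univ : Finset (Fin n)),
        Real.exp (s * ∑ i ∈ K, (x i - (∑ i, x i) / n)) := by
  set F := (powersetCard k (univ : Finset (Fin n))).filter
      (fun K => a ≤ ∑ i ∈ K, (x i - (∑ i, x i) / n)) with hF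
  calc (F.card : ℝ) * Real.exp (s * a) = ∑ _K ∈ F, Real.exp (s * a) := by
        rw [sum_const, nsmul_eq_mul]
    _ ≤ ∑ K ∈ F, Real.exp (s * ∑ i ∈ K, (x i - (∑ i, x i) / n)) := by
        refine sum_le_sum fun K hK => Real.exp_le_exp.mpr ?_
        exact mul_le_mul_of_nonneg_left (mem_filter.mp hK).2 hs
    _ ≤ ∑ K ∈ powersetCard k (univ : Finset (Fin n)),
        Real.exp (s * ∑ i ∈ K, (x i - (∑ i, x i) / n)) :=
        sum_le_sum_of_subset_of_nonneg (filter_subset _ _) fun _ _ _ => (Real.exp_pos _).le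

theorem stmt_12 (n t : ℕ) (ht : 0 < t) (htn : t < n)
    (x : Fin n → ℝ) (hx : ∀ i, x i ∈ Set.Icc (0 : ℝ) 1)
    (ε : ℝ) (hε : 0 < ε) :
    ((Finset.univ.filter
        (fun T : {s : Finset (Fin n) // s.card = t} =>
          (1 / ((n : ℝ) - t)) * ∑ i ∈ T.1ᶜ, x i - (1 / t) * ∑ i ∈ T.1, x i ≥
            Real.sqrt ((n * (t + 1) / (2 * t ^ 2 * ((n : ℝ) - t))) *
              Real.log (1 / ε)))).card : ℝ) /
      ((Finset.univ : Finset {s : Finset (Fin n) // s.card = t}).card : ℝ)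
      ≤ ε := by
  have hnpos : 0 < n := lt_trans ht htn
  have hnR : (0:ℝ) < n := by exact_mod_cast hnpos
  have htR : (0:ℝ) < t := by exact_mod_cast ht
  have hntR : (0:ℝ) < (n:ℝ) - t := by
    have : (t:ℝ) < n := by exact_mod_cast htn
    linarith
  set k : ℕ := n - t with hk
  have hkR : ((k:ℕ):ℝ) = (n:ℝ) - t := by
    rw [hk, Nat.cast_sub htn.le]
  have hkn : k < n := by omega
  set μ : ℝ := (∑ i, x i) / n with hμ
  set ν : ℝ := Real.sqrt ((n * (t + 1) / (2 * t ^ 2 * ((n : ℝ) - t))) * Real.log (1 / ε))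
    with hν
  have hν0 : 0 ≤ ν := Real.sqrt_nonneg _
  set a : ℝ := (t:ℝ) * ((n:ℝ) - t) * ν / n with ha
  have ha0 : 0 ≤ a := by positivity
  -- event equivalence and card identification
  have hcard_eq : ((Finset.univ.filter
        (fun T : {s : Finset (Fin n) // s.card = t} =>
          (1 / ((n : ℝ) - t)) * ∑ i ∈ T.1ᶜ, x i - (1 / t) * ∑ i ∈ T.1, x i ≥ ν)).card : ℕ) =
      ((powersetCard k (univ : Finset (Fin n))).filter
        (fun K => a ≤ ∑ i ∈ K, (x i - μ))).card := by
    refine Finset.card_bij (fun T _ => T.1ᶜ) ?_ ?_ ?_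
    · rintro ⟨T, hT⟩ hmem
      rw [mem_filter] at hmem ⊢
      refine ⟨mem_powersetCard.mpr ⟨subset_univ _, ?_⟩, ?_⟩
      · rw [card_compl, hT, Fintype.card_fin]
      · -- event equivalence
        have hP := hmem.2
        have hsplit : ∑ i ∈ T, x i = (∑ i, x i) - ∑ i ∈ Tᶜ, x i := by
          have := Finset.sum_add_sum_compl T x
          linarith
        have hccard : ((Tᶜ.card : ℕ) : ℝ) = (n:ℝ) - t := by
          rw [card_compl, hT, Fintype.card_fin, Nat.cast_sub htn.le]
        have hwsum : ∑ i ∈ Tᶜ, (x i - μ) = (∑ i ∈ Tᶜ, x i) - ((n:ℝ) - t) * μ := by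
          rw [sum_sub_distrib, sum_const, nsmul_eq_mul, hccard]
        simp only [ge_iff_le] at hP
        rw [hwsum, hμ]
        rw [hsplit] at hP
        set u : ℝ := ∑ i ∈ Tᶜ, x i
        set S : ℝ := ∑ i, x i
        have heq : 1 / ((n:ℝ) - t) * u - 1 / t * (S - u) =
            ((n:ℝ) / (t * ((n:ℝ) - t))) * (u - ((n:ℝ) - t) * (S / n)) := by
          field_simp
          ring
        rw [heq] at hP
        have hc : (0:ℝ) < (n:ℝ) / (t * ((n:ℝ) - t)) := by positivity
        rw [← div_le_iff₀' hc] at hP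
        have : ν / ((n:ℝ) / (t * ((n:ℝ) - t))) = a := by
          rw [ha]
          field_simp
        rwa [this] at hP
    · rintro ⟨T1, hT1⟩ h1 ⟨T2, hT2⟩ h2 hco
      simp only at hco
      ext1
      simpa using congrArg compl hco
    · intro K hK
      rw [mem_filter, mem_powersetCard] at hK
      have hKcard : Kᶜ.card = t := by
        rw [card_compl, hK.1.2, Fintype.card_fin]
        omega
      refine ⟨⟨Kᶜ, hKcard⟩, ?_, by simp⟩
      rw [mem_filter]
      refine ⟨mem_univ _, ?_⟩
      have hQ := hK.2
      show (1 / ((n:ℝ) - ↑t)) * ∑ i ∈ Kᶜᶜ, x i - (1/((t:ℕ):ℝ)) * ∑ i ∈ (Kᶜ : Finset (Fin n)), x i ≥ ν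
      rw [compl_compl]
      have hccard : ((K.card : ℕ) : ℝ) = (n:ℝ) - t := by
        rw [hK.1.2, hkR]
      have hwsum : ∑ i ∈ K, (x i - μ) = (∑ i ∈ K, x i) - ((n:ℝ) - t) * μ := by
        rw [sum_sub_distrib, sum_const, nsmul_eq_mul, hccard]
      rw [hwsum, hμ] at hQ
      set u : ℝ := ∑ i ∈ K, x i
      set S : ℝ := ∑ i, x i
      have hTx : ∑ i ∈ (Kᶜ : Finset (Fin n)), x i = S - u := by
        have := Finset.sum_add_sum_compl K x
        linarith
      rw [ge_iff_le, hTx]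
      have heq : 1 / ((n:ℝ) - t) * u - 1 / t * (S - u) =
          ((n:ℝ) / (t * ((n:ℝ) - t))) * (u - ((n:ℝ) - t) * (S / n)) := by
        field_simp
        ring
      rw [heq]
      have hc : (0:ℝ) < (n:ℝ) / (t * ((n:ℝ) - t)) := by positivity
      rw [← div_le_iff₀' hc]
      have : ν / ((n:ℝ) / (t * ((n:ℝ) - t))) = a := by
        rw [ha]
        field_simp
      rwa [this]
  -- denominator
  have hdenom : ((Finset.univ : Finset {s : Finset (Fin n) // s.card = t}).card : ℕ) =
      n.choose t := by
    rw [Finset.card_univ]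
    simpa using Fintype.card_finset_len (α := Fin n) t
  have hchoosepos : (0:ℝ) < (n.choose t : ℝ) := by
    have := Nat.choose_pos htn.le
    exact_mod_cast this
  have hchoose_symm : (n.choose k : ℝ) = (n.choose t : ℝ) := by
    rw [hk]
    rw [Nat.choose_symm htn.le]
  -- numeric part: set s and bound
  set s : ℝ := 4 * n * a / (k * ((n:ℝ) - k + 1)) with hs
  have hkRpos : (0:ℝ) < (k:ℕ) := by
    have : 0 < k := by omega
    exact_mod_cast this
  have hs0 : 0 ≤ s := by
    rw [hs]
    apply div_nonneg (by positivity)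
    apply mul_nonneg hkRpos.le
    have : (0:ℝ) < (n:ℝ) - k := by rw [hkR]; linarith
    linarith
  have hch := chernoff_count n k x s a hs0
  have hmgf := mgf_bound n x hx k hkn s
  have hBle := Bco_le n k hkn
  have hnk : (0:ℝ) < (n:ℝ) - k := by rw [hkR]; linarith
  have hexp_mono : (n.choose k : ℝ) * Real.exp (s ^ 2 * ((n:ℝ) - k) ^ 2 * Bco n k / 8) ≤
      (n.choose k : ℝ) * Real.exp (s ^ 2 * (k * ((n:ℝ) - k + 1)) / (8 * n)) := by
    apply mul_le_mul_of_nonneg_left _ (by positivity : (0:ℝ) ≤ (n.choose k : ℝ))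
    apply Real.exp_le_exp.mpr
    have h1 : ((n:ℝ) - k) ^ 2 * Bco n k ≤ (k:ℝ) * ((n:ℝ) - k + 1) / n := by
      have h2 := mul_le_mul_of_nonneg_left hBle (by positivity : (0:ℝ) ≤ ((n:ℝ) - k)^2)
      calc ((n:ℝ) - k) ^ 2 * Bco n k ≤
          ((n:ℝ) - k) ^ 2 * ((k:ℝ) * ((n:ℝ) - k + 1) / (n * ((n:ℝ) - k) ^ 2)) := h2
        _ = (k:ℝ) * ((n:ℝ) - k + 1) / n := by
            field_simp
    calc s ^ 2 * ((n:ℝ) - k) ^ 2 * Bco n k / 8 = s^2 * (((n:ℝ) - k) ^ 2 * Bco n k) / 8 := by ring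
      _ ≤ s^2 * ((k:ℝ) * ((n:ℝ) - k + 1) / n) / 8 := by
          apply div_le_div_of_nonneg_right _ (by norm_num)
          exact mul_le_mul_of_nonneg_left h1 (sq_nonneg s)
      _ = s ^ 2 * ((k:ℝ) * ((n:ℝ) - k + 1)) / (8 * n) := by ring
  -- combine
  have hM : (0:ℝ) < (k:ℝ) * ((n:ℝ) - k + 1) := by
    apply mul_pos hkRpos
    linarith
  have hexpo : -(s * a) + s ^ 2 * ((k:ℝ) * ((n:ℝ) - k + 1)) / (8 * n) =
      -(2 * n * a ^ 2 / ((k:ℝ) * ((n:ℝ) - k + 1))) := by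
    rw [hs]
    field_simp
    ring
  have hN : (((powersetCard k (univ : Finset (Fin n))).filter
      (fun K => a ≤ ∑ i ∈ K, (x i - μ))).card : ℝ) ≤
      (n.choose k : ℝ) * Real.exp (-(2 * n * a ^ 2 / ((k:ℝ) * ((n:ℝ) - k + 1)))) := by
    have h3 : (((powersetCard k (univ : Finset (Fin n))).filter
        (fun K => a ≤ ∑ i ∈ K, (x i - μ))).card : ℝ) * Real.exp (s * a) ≤
        (n.choose k : ℝ) * Real.exp (s ^ 2 * (k * ((n:ℝ) - k + 1)) / (8 * n)) :=
      le_trans hch (le_trans hmgf hexp_mono)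
    have h4 := mul_le_mul_of_nonneg_right h3 (Real.exp_pos (-(s * a))).le
    rw [mul_assoc, mul_assoc, ← Real.exp_add, ← Real.exp_add] at h4
    rw [add_neg_cancel, Real.exp_zero, mul_one] at h4
    rwa [add_comm, hexpo] at h4
  -- final exponential bound ≤ ε
  have hfinal : Real.exp (-(2 * n * a ^ 2 / ((k:ℝ) * ((n:ℝ) - k + 1)))) ≤ ε := by
    rcases le_or_gt ε 1 with hε1 | hε1
    · have hL : 0 ≤ Real.log (1 / ε) := by
        apply Real.log_nonneg
        rw [le_div_iff₀ hε]
        linarith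
      have harg : 0 ≤ (n * (t + 1) / (2 * t ^ 2 * ((n : ℝ) - t))) * Real.log (1 / ε) := by
        apply mul_nonneg _ hL
        positivity
      have hν2 : ν ^ 2 = (n * (t + 1) / (2 * t ^ 2 * ((n : ℝ) - t))) * Real.log (1 / ε) := by
        rw [hν, Real.sq_sqrt harg]
      have hkt : ((n:ℝ) - k + 1) = (t:ℝ) + 1 := by rw [hkR]; ring
      have h5 : ((t:ℝ) * ((n:ℝ) - t) * ν / n) ^ 2 = (t:ℝ)^2 * ((n:ℝ)-t)^2 * ν^2 / n^2 := by
        ring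
      have hexp_eq : 2 * n * a ^ 2 / ((k:ℝ) * ((n:ℝ) - k + 1)) = Real.log (1 / ε) := by
        rw [ha, hkt, hkR, h5, hν2]
        field_simp
      rw [hexp_eq, one_div, Real.log_inv, neg_neg, Real.exp_log hε]
    · have : -(2 * n * a ^ 2 / ((k:ℝ) * ((n:ℝ) - k + 1))) ≤ 0 := by
        apply neg_nonpos_of_nonneg
        positivity
      calc Real.exp (-(2 * n * a ^ 2 / ((k:ℝ) * ((n:ℝ) - k + 1)))) ≤ Real.exp 0 :=
            Real.exp_le_exp.mpr this
        _ = 1 := Real.exp_zero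
        _ ≤ ε := hε1.le
  -- put it together
  rw [div_le_iff₀ (by rw [hdenom]; exact hchoosepos)]
  rw [hdenom]
  calc ((Finset.univ.filter
        (fun T : {s : Finset (Fin n) // s.card = t} =>
          (1 / ((n : ℝ) - t)) * ∑ i ∈ T.1ᶜ, x i - (1 / t) * ∑ i ∈ T.1, x i ≥ ν)).card : ℝ)
      = (((powersetCard k (univ : Finset (Fin n))).filter
          (fun K => a ≤ ∑ i ∈ K, (x i - μ))).card : ℝ) := by exact_mod_cast hcard_eq
    _ ≤ (n.choose k : ℝ) * Real.exp (-(2 * n * a ^ 2 / ((k:ℝ) * ((n:ℝ) - k + 1)))) := hN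
    _ ≤ (n.choose k : ℝ) * ε := mul_le_mul_of_nonneg_left hfinal (by positivity)
    _ = ε * (n.choose t : ℝ) := by rw [hchoose_symm]; ring
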